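/- Calculus lemma (Li–Zhang, form (i)): let n ≥ 1, ν ∈ ℝ, u ∈ C¹(ℝⁿ). If for every x₀ ∈ ℝⁿ there exists 0 < λ_{x₀} < ∞ such that (λ_{x₀}/|x-x₀|)^{ν} u(x₀ + λ_{x₀}²(x-x₀)/|x-x₀|²) = u(x) for all x ≠ x₀, then there exist C ∈ ℝ, μ > 0, and x̄ ∈ ℝⁿ such that u(x) = C (μ/(1+μ²|x-x̄|²))^{ν/2} for all x. -/

import Mathlib

open Filter Topology Real RealInnerProductSpace

lemma oneD (φ : ℝ → ℝ) (hpos : ∀ t, 0 < φ t) (hdiff : Differentiable ℝ φ)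
    (hFE : ∀ s d : ℝ, d ≠ 0 → φ (s + φ s / d) * d ^ 2 = φ s * φ (s + d)) (t : ℝ) :
    φ t = t ^ 2 + (deriv φ 0) * t + φ 0 := by
  have stepA : ∀ s : ℝ, Tendsto (fun d => (φ (s + d) - d ^ 2 - deriv φ s * d) / d)
      atTop (𝓝 0) := by
    intro s
    set a := deriv φ s with ha
    have hc : (0:ℝ) < φ s := hpos s
    have hder : Tendsto (slope φ s) (𝓝[≠] s) (𝓝 a) :=
      hasDerivAt_iff_tendsto_slope.mp (hdiff s).hasDerivAt
    have hcd : Tendsto (fun d : ℝ => s + φ s / d) atTop (𝓝[≠] s) := by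
      rw [tendsto_nhdsWithin_iff]
      constructor
      · have h1 : Tendsto (fun d : ℝ => φ s / d) atTop (𝓝 0) :=
          tendsto_const_nhds.div_atTop tendsto_id
        simpa using tendsto_const_nhds.add h1
      · filter_upwards [eventually_gt_atTop 0] with d hd
        have : φ s / d ≠ 0 := ne_of_gt (div_pos hc hd)
        simp [this]
    have hstep : Tendsto (fun d : ℝ => slope φ s (s + φ s / d) - a) atTop (𝓝 0) := by
      simpa using (hder.comp hcd).sub_const a
    refine hstep.congr' ?_
    filter_upwards [eventually_gt_atTop 0] with d hd
    have hd0 : d ≠ 0 := ne_of_gt hd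
    have hFEd := hFE s d hd0
    have hval : φ (s + φ s / d) = φ s * φ (s + d) / d ^ 2 := by
      field_simp at hFEd ⊢; linarith
    have hφs : φ s ≠ 0 := ne_of_gt hc
    have hsub : s + φ s / d - s = φ s / d := by ring
    rw [slope_def_field, hsub, hval]
    field_simp
  have stepB : ∀ s : ℝ, deriv φ s = deriv φ 0 + 2 * s := by
    intro s
    set a0 := deriv φ 0 with ha0
    set as := deriv φ s with has
    have h0 : Tendsto (fun t : ℝ => (φ (0 + t) - t ^ 2 - a0 * t) / t) atTop (𝓝 0) := stepA 0
    have hshift : Tendsto (fun t : ℝ => t - s) atTop atTop :=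
      tendsto_atTop_add_const_right atTop (-s) tendsto_id
    have hs' : Tendsto (fun t : ℝ => (φ (s + (t - s)) - (t - s) ^ 2 - as * (t - s)) / (t - s))
        atTop (𝓝 0) := (stepA s).comp hshift
    have hratio : Tendsto (fun t : ℝ => (t - s) / t) atTop (𝓝 1) := by
      have h1 : Tendsto (fun t : ℝ => s / t) atTop (𝓝 0) :=
        tendsto_const_nhds.div_atTop tendsto_id
      have h2 : Tendsto (fun t : ℝ => 1 - s / t) atTop (𝓝 (1 - 0)) :=
        tendsto_const_nhds.sub h1
      have h3 : Tendsto (fun t : ℝ => 1 - s / t) atTop (𝓝 1) := by simpa using h2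
      refine h3.congr' ?_
      filter_upwards [eventually_gt_atTop 0] with t ht
      field_simp
    have hcomb : Tendsto (fun t : ℝ => (φ (0 + t) - t ^ 2 - a0 * t) / t -
        ((t - s) / t) * ((φ (s + (t - s)) - (t - s) ^ 2 - as * (t - s)) / (t - s)))
        atTop (𝓝 0) := by
      have := h0.sub (hratio.mul hs')
      simpa using this
    have hcomb2 : Tendsto (fun t : ℝ => (as - a0 - 2 * s) + (s ^ 2 - as * s) / t)
        atTop (𝓝 (as - a0 - 2 * s)) := by
      have h1 : Tendsto (fun t : ℝ => (s ^ 2 - as * s) / t) atTop (𝓝 0) :=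
        tendsto_const_nhds.div_atTop tendsto_id
      simpa using tendsto_const_nhds.add h1
    have heq : (fun t : ℝ => (φ (0 + t) - t ^ 2 - a0 * t) / t -
        ((t - s) / t) * ((φ (s + (t - s)) - (t - s) ^ 2 - as * (t - s)) / (t - s)))
        =ᶠ[atTop] (fun t : ℝ => (as - a0 - 2 * s) + (s ^ 2 - as * s) / t) := by
      filter_upwards [eventually_gt_atTop (max 0 (s + 1))] with t ht
      have ht0 : t ≠ 0 := ne_of_gt (lt_of_le_of_lt (le_max_left _ _) ht)
      have hts : t - s ≠ 0 := by
        have : s + 1 < t := lt_of_le_of_lt (le_max_right _ _) ht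
        intro h; nlinarith
      rw [zero_add]
      field_simp
      ring
    have := tendsto_nhds_unique (hcomb.congr' heq) hcomb2
    linarith
  -- step C
  set a0 := deriv φ 0 with ha0
  have hψ : ∀ x : ℝ, HasDerivAt (fun t => φ t - (t ^ 2 + a0 * t)) 0 x := by
    intro x
    have h1 : HasDerivAt (fun t : ℝ => t ^ 2 + a0 * t) (2 * x + a0) x := by
      have hp : HasDerivAt (fun t : ℝ => t ^ 2) (2 * x) x := by
        simpa using hasDerivAt_pow 2 x
      have hl : HasDerivAt (fun t : ℝ => a0 * t) a0 x := by
        simpa using (hasDerivAt_id x).const_mul a0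
      exact hp.add hl
    have h2 : HasDerivAt φ (a0 + 2 * x) x := by
      have := (hdiff x).hasDerivAt
      rwa [stepB x] at this
    have h3 := h2.sub h1
    have h4 : a0 + 2 * x - (2 * x + a0) = 0 := by ring
    rwa [h4] at h3
  have hconst : ∀ x y : ℝ, (fun t => φ t - (t ^ 2 + a0 * t)) x = (fun t => φ t - (t ^ 2 + a0 * t)) y := by
    intro x y
    exact is_const_of_deriv_eq_zero (fun z => (hψ z).differentiableAt)
      (fun z => (hψ z).deriv) x y
  have := hconst t 0
  simp at this
  linarith

set_option maxHeartbeats 1000000 in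
theorem stmt_16 (n : ℕ) (hn : 1 ≤ n) (ν : ℝ)
    (u : EuclideanSpace ℝ (Fin n) → ℝ) (hreg : ContDiff ℝ 1 u)
    (hinv : ∀ x₀ : EuclideanSpace ℝ (Fin n), ∃ lam : ℝ, 0 < lam ∧
      ∀ x, x ≠ x₀ →
        (lam / ‖x - x₀‖) ^ ν * u (x₀ + (lam ^ 2 / ‖x - x₀‖ ^ 2) • (x - x₀)) = u x) :
    ∃ (C μ : ℝ) (xb : EuclideanSpace ℝ (Fin n)), 0 < μ ∧
      ∀ x, u x = C * (μ / (1 + μ ^ 2 * ‖x - xb‖ ^ 2)) ^ (ν / 2) := by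
  classical
  choose lam hlam using hinv
  have hlam0 : ∀ x₀, 0 < lam x₀ := fun x₀ => (hlam x₀).1
  have hK := fun x₀ => (hlam x₀).2
  obtain ⟨e, he⟩ : ∃ e : EuclideanSpace ℝ (Fin n), ‖e‖ = 1 := by
    refine ⟨EuclideanSpace.single ⟨0, hn⟩ (1:ℝ), ?_⟩
    simp [EuclideanSpace.norm_single]
  have hucont : Continuous u := hreg.continuous
  -- norms of R • e - p go to infinity
  have hnt : ∀ p : EuclideanSpace ℝ (Fin n),
      Tendsto (fun R : ℝ => ‖R • e - p‖) atTop atTop := by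
    intro p
    apply tendsto_atTop_mono' atTop ?_
      (tendsto_atTop_add_const_right atTop (-‖p‖) tendsto_id)
    filter_upwards [eventually_ge_atTop 0] with R hR
    have h1 : ‖R • e‖ - ‖p‖ ≤ ‖R • e - p‖ := norm_sub_norm_le _ _
    rw [norm_smul, he, mul_one, Real.norm_eq_abs, abs_of_nonneg hR] at h1
    simpa [sub_eq_add_neg] using h1
  -- key limit
  have hlim : ∀ p, Tendsto (fun R : ℝ => ‖R • e - p‖ ^ ν * u (R • e)) atTop
      (𝓝 (lam p ^ ν * u p)) := by
    intro p
    have hTp : Tendsto (fun R : ℝ => p + ((lam p) ^ 2 / ‖R • e - p‖ ^ 2) • (R • e - p))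
        atTop (𝓝 p) := by
      rw [tendsto_iff_norm_sub_tendsto_zero]
      have h0 : Tendsto (fun R : ℝ => (lam p) ^ 2 / ‖R • e - p‖) atTop (𝓝 0) :=
        tendsto_const_nhds.div_atTop (hnt p)
      refine h0.congr' ?_
      filter_upwards [(hnt p).eventually_gt_atTop 0] with R hR
      rw [add_sub_cancel_left, norm_smul, Real.norm_eq_abs,
        abs_of_nonneg (by positivity : (0:ℝ) ≤ (lam p) ^ 2 / ‖R • e - p‖ ^ 2)]
      field_simp
    have hTu : Tendsto
        (fun R : ℝ => lam p ^ ν * u (p + ((lam p) ^ 2 / ‖R • e - p‖ ^ 2) • (R • e - p)))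
        atTop (𝓝 (lam p ^ ν * u p)) :=
      (((hucont.tendsto p).comp hTp).const_mul _)
    refine hTu.congr' ?_
    filter_upwards [(hnt p).eventually_gt_atTop 0] with R hR
    have hne : R • e ≠ p := by
      intro h; rw [h] at hR; simp at hR
    have hKk := hK p (R • e) hne
    rw [Real.div_rpow (hlam0 p).le (norm_nonneg _)] at hKk
    have hrν : (0:ℝ) < ‖R • e - p‖ ^ ν := Real.rpow_pos_of_pos hR ν
    field_simp at hKk
    linarith [hKk]
  -- the invariant A
  have key : ∀ p q, lam p ^ ν * u p = lam q ^ ν * u q := by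
    intro p q
    have hratio : Tendsto (fun R : ℝ => ‖R • e - p‖ / ‖R • e - q‖) atTop (𝓝 1) := by
      have hb : Tendsto (fun R : ℝ => (‖R • e - p‖ - ‖R • e - q‖) / ‖R • e - q‖)
          atTop (𝓝 0) := by
        apply squeeze_zero_norm' ?_
          (tendsto_const_nhds.div_atTop (hnt q) : Tendsto (fun R : ℝ => ‖q - p‖ / ‖R • e - q‖) atTop (𝓝 0))
        filter_upwards [(hnt q).eventually_gt_atTop 0] with R hR
        rw [norm_div, Real.norm_eq_abs, Real.norm_eq_abs, abs_of_pos hR]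
        have h3 : |‖R • e - p‖ - ‖R • e - q‖| ≤ ‖q - p‖ := by
          have h5 := abs_norm_sub_norm_le (R • e - p) (R • e - q)
          have h4 : (R • e - p) - (R • e - q) = q - p := by abel
          rwa [h4] at h5
        gcongr
      have h2 : Tendsto (fun R : ℝ => 1 + (‖R • e - p‖ - ‖R • e - q‖) / ‖R • e - q‖)
          atTop (𝓝 (1 + 0)) := tendsto_const_nhds.add hb
      rw [add_zero] at h2
      refine h2.congr' ?_
      filter_upwards [(hnt q).eventually_gt_atTop 0] with R hR
      field_simp
      ring
    have hratioν : Tendsto (fun R : ℝ => (‖R • e - p‖ / ‖R • e - q‖) ^ ν) atTop (𝓝 1) := by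
      have h6 := hratio.rpow_const (p := ν) (Or.inl one_ne_zero)
      simpa using h6
    have hcomb : Tendsto
        (fun R : ℝ => (‖R • e - p‖ / ‖R • e - q‖) ^ ν * (‖R • e - q‖ ^ ν * u (R • e)))
        atTop (𝓝 (1 * (lam q ^ ν * u q))) := hratioν.mul (hlim q)
    rw [one_mul] at hcomb
    refine tendsto_nhds_unique (hlim p) (hcomb.congr' ?_)
    filter_upwards [(hnt p).eventually_gt_atTop 0, (hnt q).eventually_gt_atTop 0] with R hp hq
    rw [Real.div_rpow (norm_nonneg _) (norm_nonneg _)]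
    have : (0:ℝ) < ‖R • e - q‖ ^ ν := Real.rpow_pos_of_pos hq ν
    field_simp
  -- case ν = 0
  by_cases hν : ν = 0
  · refine ⟨u 0, 1, 0, one_pos, fun x => ?_⟩
    have hx := key x 0
    subst hν
    simp only [Real.rpow_zero, one_mul] at hx
    rw [hx]
    norm_num
  -- the constant A
  set A := lam 0 ^ ν * u 0 with hA
  have hkeyA : ∀ p, lam p ^ ν * u p = A := fun p => key p 0
  by_cases hA0 : A = 0
  · refine ⟨0, 1, 0, one_pos, fun x => ?_⟩
    have hx := hkeyA x
    rw [hA0] at hx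
    have hpos := Real.rpow_pos_of_pos (hlam0 x) ν
    have hux : u x = 0 := by
      rcases mul_eq_zero.mp hx with h | h
      · exact absurd h (ne_of_gt hpos)
      · exact h
    rw [hux, zero_mul]
  -- main case : ν ≠ 0, A ≠ 0
  have hune : ∀ p, u p ≠ 0 := by
    intro p hp
    apply hA0
    rw [← hkeyA p, hp, mul_zero]
  have hAu : ∀ p, A / u p = lam p ^ ν := by
    intro p
    rw [← hkeyA p]
    field_simp [hune p]
  set g : EuclideanSpace ℝ (Fin n) → ℝ := fun x => (A / u x) ^ ((2:ℝ)/ν) with hgdef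
  have hg2 : ∀ x, g x = lam x ^ 2 := by
    intro x
    show (A / u x) ^ ((2:ℝ)/ν) = lam x ^ 2
    rw [hAu x, ← Real.rpow_mul (hlam0 x).le]
    rw [show ν * (2/ν) = (2:ℝ) by field_simp]
    rw [show ((2:ℝ)) = ((2:ℕ):ℝ) by norm_num, Real.rpow_natCast]
  have hgpos : ∀ x, 0 < g x := fun x => (hg2 x) ▸ pow_pos (hlam0 x) 2
  have hgdiff : Differentiable ℝ g := by
    intro x
    have h1 : DifferentiableAt ℝ (fun y => A / u y) x := by
      have h0 : DifferentiableAt ℝ (fun y => A * (u y)⁻¹) x :=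
        ((hreg.differentiable one_ne_zero x).inv (hune x)).const_mul A
      refine h0.congr_of_eventuallyEq ?_
      filter_upwards with y
      rw [div_eq_mul_inv]
    have h2 : A / u x ≠ 0 := by
      rw [hAu x]; exact (Real.rpow_pos_of_pos (hlam0 x) ν).ne'
    exact h1.rpow_const (Or.inl h2)
  -- functional equation for g
  have hFEg : ∀ a x, x ≠ a →
      g (a + (g a / ‖x - a‖ ^ 2) • (x - a)) * ‖x - a‖ ^ 2 = g a * g x := by
    intro a x hxa
    have hr : (0:ℝ) < ‖x - a‖ := by rwa [norm_pos_iff, sub_ne_zero]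
    have hKk := hK a x hxa
    set T := a + (lam a ^ 2 / ‖x - a‖ ^ 2) • (x - a) with hT
    have hTg : a + (g a / ‖x - a‖ ^ 2) • (x - a) = T := by rw [hg2 a]
    rw [hTg, hg2, hg2, hg2]
    have hlamT : (0:ℝ) < lam T := hlam0 T
    have hTν := (Real.rpow_pos_of_pos hlamT ν).ne'
    have hxν := (Real.rpow_pos_of_pos (hlam0 x) ν).ne'
    have haν := (Real.rpow_pos_of_pos (hlam0 a) ν).ne'
    have hrν := (Real.rpow_pos_of_pos hr ν).ne'
    have e1 : u T = A / lam T ^ ν := by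
      rw [eq_div_iff hTν]; linarith [hkeyA T]
    have e2 : u x = A / lam x ^ ν := by
      rw [eq_div_iff hxν]; linarith [hkeyA x]
    rw [e1, e2, Real.div_rpow (hlam0 a).le (norm_nonneg _)] at hKk
    have hrp : lam T ^ ν = (lam a * lam x / ‖x - a‖) ^ ν := by
      rw [Real.div_rpow (mul_pos (hlam0 a) (hlam0 x)).le hr.le,
        Real.mul_rpow (hlam0 a).le (hlam0 x).le]
      rw [eq_div_iff hrν]
      field_simp at hKk
      -- cancel A
      have h6 : A * (lam T ^ ν * ‖x - a‖ ^ ν) = A * (lam a ^ ν * lam x ^ ν) := by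
        rw [hKk]; ring
      have := mul_left_cancel₀ hA0 h6
      linarith [this]
    have hc : (0:ℝ) < lam a * lam x / ‖x - a‖ := div_pos (mul_pos (hlam0 a) (hlam0 x)) hr
    have hν' : ν ≠ 0 := hν
    have hlamT_eq : lam T = lam a * lam x / ‖x - a‖ := by
      have h1 := congrArg (fun z : ℝ => z ^ (1/ν)) hrp
      rwa [← Real.rpow_mul hlamT.le, ← Real.rpow_mul hc.le, mul_one_div, div_self hν',
        Real.rpow_one, Real.rpow_one] at h1
    rw [hlamT_eq]
    field_simp
  -- quadratic structure of g
  have hquad : ∀ w : EuclideanSpace ℝ (Fin n),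
      g w = ‖w‖ ^ 2 + (fderiv ℝ g 0) w + g 0 := by
    intro w
    rcases eq_or_ne w 0 with h | h
    · simp [h]
    · have hw0 : ‖w‖ ≠ 0 := norm_ne_zero_iff.mpr h
      obtain ⟨v, hvn, hwv⟩ : ∃ v : EuclideanSpace ℝ (Fin n), ‖v‖ = 1 ∧ ‖w‖ • v = w := by
        refine ⟨‖w‖⁻¹ • w, ?_, ?_⟩
        · rw [norm_smul, Real.norm_eq_abs, abs_of_nonneg (inv_nonneg.mpr (norm_nonneg w)),
            inv_mul_cancel₀ hw0]
        · rw [smul_smul, mul_inv_cancel₀ hw0, one_smul]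
      have hvne : v ≠ 0 := by
        intro hh; rw [hh] at hvn; simp at hvn
      set φ : ℝ → ℝ := fun t => g (t • v) with hφ
      have hφpos : ∀ t, 0 < φ t := fun t => hgpos _
      have hφdiff : Differentiable ℝ φ := hgdiff.comp (differentiable_id.smul_const v)
      have hφFE : ∀ s d : ℝ, d ≠ 0 → φ (s + φ s / d) * d ^ 2 = φ s * φ (s + d) := by
        intro s d hd
        have hxa : (s + d) • v ≠ s • v := by
          intro hcon
          apply hd
          have h5 := sub_eq_zero.mpr hcon
          rw [← sub_smul, add_sub_cancel_left] at h5
          rcases smul_eq_zero.mp h5 with h6 | h6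
          · exact h6
          · exact absurd h6 hvne
        have hFEg' := hFEg (s • v) ((s + d) • v) hxa
        have hnorm : ‖(s + d) • v - s • v‖ = |d| := by
          rw [← sub_smul, add_sub_cancel_left, norm_smul, hvn, mul_one, Real.norm_eq_abs]
        rw [hnorm, sq_abs] at hFEg'
        have hpt : s • v + (g (s • v) / d ^ 2) • ((s + d) • v - s • v)
            = (s + g (s • v) / d) • v := by
          rw [← sub_smul, add_sub_cancel_left, smul_smul, ← add_smul]
          congr 1
          field_simp
        rw [hpt] at hFEg'
        simpa [hφ] using hFEg'
      have h1 := oneD φ hφpos hφdiff hφFE ‖w‖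
      have hdv : HasDerivAt φ ((fderiv ℝ g 0) v) 0 := by
        have hvd : HasDerivAt (fun t : ℝ => t • v) v (0:ℝ) := by
          simpa using (hasDerivAt_id (0:ℝ)).smul_const v
        have h7 := ((hgdiff ((0:ℝ) • v)).hasFDerivAt).comp_hasDerivAt (0:ℝ) hvd
        simp only [zero_smul] at h7
        exact h7
      rw [hdv.deriv] at h1
      have hφw : φ ‖w‖ = g w := by simp only [hφ]; rw [hwv]
      have hφ0 : φ 0 = g 0 := by simp [hφ]
      rw [hφw, hφ0] at h1
      rw [h1]
      have h8 : (fderiv ℝ g 0) w = ‖w‖ * (fderiv ℝ g 0) v := by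
        conv_lhs => rw [← hwv]
        rw [map_smul, smul_eq_mul]
      rw [h8]
      ring
  -- Riesz representation and completing the square
  set L := fderiv ℝ g 0 with hL
  set w₀ : EuclideanSpace ℝ (Fin n) := (InnerProductSpace.toDual ℝ _).symm L with hw₀def
  have hw₀x : ∀ x : EuclideanSpace ℝ (Fin n), ⟪w₀, x⟫ = L x := fun x =>
    InnerProductSpace.toDual_symm_apply
  set c : EuclideanSpace ℝ (Fin n) := (-(2:ℝ)⁻¹) • w₀ with hcdef
  have hgc : ∀ x, g x = ‖x - c‖ ^ 2 + g c := by
    intro x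
    have h1 := hquad x
    have h2 := hquad c
    have h3 : ‖x - c‖ ^ 2 = ‖x‖ ^ 2 - 2 * ⟪x, c⟫ + ‖c‖ ^ 2 := norm_sub_sq_real x c
    have hLc : L c = -(2:ℝ)⁻¹ * ‖w₀‖ ^ 2 := by
      rw [← hw₀x c, hcdef, real_inner_smul_right, real_inner_self_eq_norm_sq]
    have hxc : ⟪x, c⟫ = -(2:ℝ)⁻¹ * L x := by
      rw [hcdef, real_inner_smul_right, real_inner_comm, hw₀x x]
    have hcn : ‖c‖ ^ 2 = (4:ℝ)⁻¹ * ‖w₀‖ ^ 2 := by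
      rw [hcdef, norm_smul, Real.norm_eq_abs, show |(-(2:ℝ)⁻¹)| = (2:ℝ)⁻¹ by norm_num]
      ring
    rw [h1, h2, h3, hLc, hxc, hcn]
    ring
  -- final assembly
  have hb : 0 < g c := hgpos c
  have hsb : 0 < Real.sqrt (g c) := Real.sqrt_pos.mpr hb
  refine ⟨A / (Real.sqrt (g c)) ^ (ν/2), (Real.sqrt (g c))⁻¹, c, by positivity, fun x => ?_⟩
  have hux : u x = A / (g x) ^ (ν/2) := by
    have h2 : (g x) ^ (ν/2) = lam x ^ ν := by
      rw [hg2 x, ← Real.rpow_natCast (lam x) 2, ← Real.rpow_mul (hlam0 x).le]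
      congr 1
      push_cast
      ring
    rw [h2, eq_div_iff (Real.rpow_pos_of_pos (hlam0 x) ν).ne']
    linarith [hkeyA x]
  rw [hux, hgc x]
  have hsq : (Real.sqrt (g c)) ^ 2 = g c := Real.sq_sqrt hb.le
  have h3 : (Real.sqrt (g c))⁻¹ / (1 + ((Real.sqrt (g c))⁻¹) ^ 2 * ‖x - c‖ ^ 2)
      = Real.sqrt (g c) / (g c + ‖x - c‖ ^ 2) := by
    rw [div_eq_div_iff (by positivity) (by positivity)]
    field_simp
    nlinarith [hsq]
  rw [h3]
  rw [Real.div_rpow hsb.le (by positivity : (0:ℝ) ≤ g c + ‖x - c‖ ^ 2)]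
  have h4 := (Real.rpow_pos_of_pos hsb (ν/2)).ne'
  have h5 := (Real.rpow_pos_of_pos (by positivity : (0:ℝ) < g c + ‖x - c‖ ^ 2) (ν/2)).ne'
  rw [show ‖x - c‖ ^ 2 + g c = g c + ‖x - c‖ ^ 2 by ring]
  field_simp
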